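/- Let f : ℝ^D → ℝ be twice continuously differentiable with γ_H-Lipschitz Hessian, let X be a finite set of points in ℝ^D containing xᵢ, with noiseless function values. Then the feasible region of the gradient-estimation linear program is nonempty: there exist g ∈ ℝ^D, h ≥ 0 and γ ≥ 0 (namely g = ∇f(xᵢ), h = ‖H(xᵢ)‖, γ = γ_H) such that for every xⱼ ∈ X \ {xᵢ}, ⟨g, uᵢⱼ⟩ − (1/2)·μᵢⱼ·h − (1/6)·μᵢⱼ²·γ ≤ g̃ᵢⱼ and −⟨g, uᵢⱼ⟩ − (1/2)·μᵢⱼ·h − (1/6)·μᵢⱼ²·γ ≤ −g̃ᵢⱼ. -/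

import Mathlib

open Set

private lemma sage_mono_aux {φ φ' : ℝ → ℝ} (hφ : ∀ t, HasDerivAt φ (φ' t) t)
    {a b c : ℝ} (hb : ∀ t ∈ Icc (0:ℝ) 1, φ' t ≤ a + b * t + c * t ^ 2) :
    ∀ t ∈ Icc (0:ℝ) 1, φ t - φ 0 ≤ a * t + b * t ^ 2 / 2 + c * t ^ 3 / 3 := by
  intro t ht
  set u : ℝ → ℝ := fun s => a * s + b * s ^ 2 / 2 + c * s ^ 3 / 3 - φ s with hu
  have hu' : ∀ s, HasDerivAt u (a + b * s + c * s ^ 2 - φ' s) s := by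
    intro s
    have h1 : HasDerivAt (fun s : ℝ => a * s + b * s ^ 2 / 2 + c * s ^ 3 / 3)
        (a + b * s + c * s ^ 2) s := by
      have := (((hasDerivAt_id s).const_mul a).add
        (((hasDerivAt_pow 2 s).const_mul b).div_const 2)).add
        (((hasDerivAt_pow 3 s).const_mul c).div_const 3)
      exact this.congr_deriv (by norm_num; ring)
    exact h1.sub (hφ s)
  have hmono : MonotoneOn u (Icc (0:ℝ) 1) := by
    apply monotoneOn_of_deriv_nonneg (convex_Icc 0 1)
    · exact fun s _ => ((hu' s).differentiableAt.continuousAt).continuousWithinAt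
    · exact fun s _ => ((hu' s).differentiableAt).differentiableWithinAt
    · intro s hs
      rw [interior_Icc] at hs
      rw [(hu' s).deriv]
      have := hb s ⟨hs.1.le, hs.2.le⟩
      linarith
  have h0 : (0:ℝ) ∈ Icc (0:ℝ) 1 := ⟨le_refl 0, zero_le_one⟩
  have := hmono h0 ht ht.1
  simp only [hu] at this
  nlinarith [this]

private lemma sage_mono_key {φ φ' : ℝ → ℝ} (hφ : ∀ t, HasDerivAt φ (φ' t) t)
    {a b c : ℝ} (hb : ∀ t ∈ Icc (0:ℝ) 1, |φ' t| ≤ a + b * t + c * t ^ 2) :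
    ∀ t ∈ Icc (0:ℝ) 1, |φ t - φ 0| ≤ a * t + b * t ^ 2 / 2 + c * t ^ 3 / 3 := by
  intro t ht
  have h1 := sage_mono_aux hφ (fun s hs => (abs_le.mp (hb s hs)).2) t ht
  have h2 := sage_mono_aux (φ := fun s => -φ s) (φ' := fun s => -φ' s)
    (a := a) (b := b) (c := c)
    (fun s => (hφ s).neg) (fun s hs => by
      have := (abs_le.mp (hb s hs)).1; linarith) t ht
  rw [abs_le]
  constructor <;> linarith

/-- Nonemptiness of the feasible region of the gradient-estimation
linear program (noiseless case). -/
theorem sage_lp_feasible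
    {D : ℕ} (hD : 1 ≤ D)
    (f : EuclideanSpace ℝ (Fin D) → ℝ)
    (hf : ContDiff ℝ 2 f)
    (γH : ℝ) (hγH : 0 ≤ γH)
    (hLip : ∀ x₁ x₂ : EuclideanSpace ℝ (Fin D),
      ‖iteratedFDeriv ℝ 2 f x₁ - iteratedFDeriv ℝ 2 f x₂‖ ≤ γH * ‖x₁ - x₂‖)
    (X : Finset (EuclideanSpace ℝ (Fin D)))
    (xi : EuclideanSpace ℝ (Fin D)) (hxi : xi ∈ X) :
    ∃ (g : EuclideanSpace ℝ (Fin D)) (h γ : ℝ), 0 ≤ h ∧ 0 ≤ γ ∧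
      g = gradient f xi ∧ h = ‖iteratedFDeriv ℝ 2 f xi‖ ∧ γ = γH ∧
      ∀ xj ∈ X, xj ≠ xi →
        ((inner ℝ g ((‖xj - xi‖)⁻¹ • (xj - xi)) : ℝ) -
            (1 / 2) * ‖xj - xi‖ * h - (1 / 6) * ‖xj - xi‖ ^ 2 * γ ≤
          (f xj - f xi) / ‖xj - xi‖) ∧
        (-(inner ℝ g ((‖xj - xi‖)⁻¹ • (xj - xi)) : ℝ) -
            (1 / 2) * ‖xj - xi‖ * h - (1 / 6) * ‖xj - xi‖ ^ 2 * γ ≤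
          -((f xj - f xi) / ‖xj - xi‖)) := by
  classical
  refine ⟨gradient f xi, ‖iteratedFDeriv ℝ 2 f xi‖, γH, norm_nonneg _, hγH,
    rfl, rfl, rfl, ?_⟩
  intro xj _ hne
  set v := xj - xi with hv
  set μ := ‖v‖ with hμdef
  have hμ : 0 < μ := norm_pos_iff.mpr (sub_ne_zero.mpr hne)
  have hfd : Differentiable ℝ f := hf.differentiable (by norm_num)
  have hF : ContDiff ℝ 1 (fderiv ℝ f) := hf.fderiv_right (by norm_num)
  have hFd : Differentiable ℝ (fderiv ℝ f) := hF.differentiable (by norm_num)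
  set c : ℝ → EuclideanSpace ℝ (Fin D) := fun t => xi + t • v with hc
  have hcd : ∀ t, HasDerivAt c v t := by
    intro t
    have : HasDerivAt (fun t : ℝ => t • v) ((1:ℝ) • v) t :=
      (hasDerivAt_id t).smul_const v
    simpa only [one_smul] using this.const_add xi
  -- norm of c t - xi
  have hct : ∀ t ∈ Icc (0:ℝ) 1, ‖c t - xi‖ = t * μ := by
    intro t ht
    simp only [hc, add_sub_cancel_left, norm_smul, Real.norm_eq_abs,
      abs_of_nonneg ht.1, ← hμdef]
  -- second derivative along the segment
  set G : ℝ → ℝ := fun t => fderiv ℝ f (c t) v with hG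
  have hGd : ∀ t, HasDerivAt G (fderiv ℝ (fderiv ℝ f) (c t) v v) t := by
    intro t
    have h2 : HasDerivAt (fun t => fderiv ℝ f (c t))
        (fderiv ℝ (fderiv ℝ f) (c t) v) t :=
      (hFd (c t)).hasFDerivAt.comp_hasDerivAt t (hcd t)
    exact (ContinuousLinearMap.apply ℝ ℝ v).hasFDerivAt.comp_hasDerivAt t h2
  -- pointwise bound on the second derivative via iteratedFDeriv
  have key2 : ∀ z : EuclideanSpace ℝ (Fin D),
      |fderiv ℝ (fderiv ℝ f) z v v - fderiv ℝ (fderiv ℝ f) xi v v| ≤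
        γH * ‖z - xi‖ * μ ^ 2 := by
    intro z
    have e1 : fderiv ℝ (fderiv ℝ f) z v v = iteratedFDeriv ℝ 2 f z ![v, v] := by
      rw [iteratedFDeriv_two_apply]; simp
    have e2 : fderiv ℝ (fderiv ℝ f) xi v v = iteratedFDeriv ℝ 2 f xi ![v, v] := by
      rw [iteratedFDeriv_two_apply]; simp
    rw [e1, e2]
    have h3 : iteratedFDeriv ℝ 2 f z ![v, v] - iteratedFDeriv ℝ 2 f xi ![v, v] =
        (iteratedFDeriv ℝ 2 f z - iteratedFDeriv ℝ 2 f xi) ![v, v] := by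
      simp
    rw [h3]
    calc |(iteratedFDeriv ℝ 2 f z - iteratedFDeriv ℝ 2 f xi) ![v, v]|
        ≤ ‖iteratedFDeriv ℝ 2 f z - iteratedFDeriv ℝ 2 f xi‖ * ∏ i, ‖(![v, v]) i‖ :=
          (iteratedFDeriv ℝ 2 f z - iteratedFDeriv ℝ 2 f xi).le_opNorm ![v, v]
      _ ≤ γH * ‖z - xi‖ * μ ^ 2 := by
          have hp : (∏ i, ‖(![v, v]) i‖) = μ ^ 2 := by
            simp [Fin.prod_univ_two, sq, ← hμdef]
          rw [hp]
          exact mul_le_mul_of_nonneg_right (hLip z xi) (by positivity)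
  have keyH : ∀ z : EuclideanSpace ℝ (Fin D),
      |fderiv ℝ (fderiv ℝ f) xi v v| ≤ ‖iteratedFDeriv ℝ 2 f xi‖ * μ ^ 2 := by
    intro z
    have e2 : fderiv ℝ (fderiv ℝ f) xi v v = iteratedFDeriv ℝ 2 f xi ![v, v] := by
      rw [iteratedFDeriv_two_apply]; simp
    rw [e2]
    calc |iteratedFDeriv ℝ 2 f xi ![v, v]|
        ≤ ‖iteratedFDeriv ℝ 2 f xi‖ * ∏ i, ‖(![v, v]) i‖ :=
          (iteratedFDeriv ℝ 2 f xi).le_opNorm ![v, v]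
      _ = ‖iteratedFDeriv ℝ 2 f xi‖ * μ ^ 2 := by
          simp [Fin.prod_univ_two, sq, ← hμdef]
  set H : ℝ := ‖iteratedFDeriv ℝ 2 f xi‖ with hHdef
  -- Step A : bound on |G t - G 0|
  have stepA : ∀ t ∈ Icc (0:ℝ) 1,
      |G t - G 0| ≤ (H * μ ^ 2) * t + (γH * μ ^ 3) * t ^ 2 / 2 + 0 * t ^ 3 / 3 := by
    apply sage_mono_key hGd
    intro t ht
    have h1 := key2 (c t)
    have h2 := keyH (c t)
    rw [hct t ht] at h1
    have : |fderiv ℝ (fderiv ℝ f) (c t) v v| ≤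
        H * μ ^ 2 + γH * (t * μ) * μ ^ 2 := by
      calc |fderiv ℝ (fderiv ℝ f) (c t) v v|
          ≤ |fderiv ℝ (fderiv ℝ f) xi v v| +
            |fderiv ℝ (fderiv ℝ f) (c t) v v - fderiv ℝ (fderiv ℝ f) xi v v| := by
            have := abs_add_le (fderiv ℝ (fderiv ℝ f) xi v v)
              (fderiv ℝ (fderiv ℝ f) (c t) v v - fderiv ℝ (fderiv ℝ f) xi v v)
            simpa using this
        _ ≤ H * μ ^ 2 + γH * (t * μ) * μ ^ 2 := add_le_add h2 h1
    calc |fderiv ℝ (fderiv ℝ f) (c t) v v| ≤ H * μ ^ 2 + γH * (t * μ) * μ ^ 2 := this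
      _ = H * μ ^ 2 + (γH * μ ^ 3) * t := by ring
      _ ≤ H * μ ^ 2 + (γH * μ ^ 3) * t + 0 * t ^ 2 := by simp
  -- Step B : Taylor bound on f along the segment
  set φ : ℝ → ℝ := fun t => f (c t) - G 0 * t with hφdef
  have hφd : ∀ t, HasDerivAt φ (G t - G 0) t := by
    intro t
    have h1 : HasDerivAt (fun t => f (c t)) (fderiv ℝ f (c t) v) t :=
      (hfd (c t)).hasFDerivAt.comp_hasDerivAt t (hcd t)
    exact h1.sub (((hasDerivAt_id t).const_mul (G 0)).congr_deriv (by ring))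
  have stepB : |φ 1 - φ 0| ≤ 0 * 1 + (H * μ ^ 2) * 1 ^ 2 / 2 + (γH * μ ^ 3 / 2) * 1 ^ 3 / 3 := by
    apply sage_mono_key hφd _ 1 ⟨zero_le_one, le_refl 1⟩
    intro t ht
    have := stepA t ht
    calc |G t - G 0| ≤ (H * μ ^ 2) * t + (γH * μ ^ 3) * t ^ 2 / 2 + 0 * t ^ 3 / 3 := this
      _ = 0 + (H * μ ^ 2) * t + (γH * μ ^ 3 / 2) * t ^ 2 := by ring
  -- identify the pieces
  have hc1 : c 1 = xj := by simp [hc, hv]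
  have hc0 : c 0 = xi := by simp [hc]
  have hG0 : G 0 = (inner ℝ (gradient f xi) v : ℝ) := by
    have hgrad : HasGradientAt f (gradient f xi) xi := (hfd xi).hasGradientAt
    have := hgrad.hasFDerivAt.fderiv
    simp only [hG, hc0, this]
    rw [InnerProductSpace.toDual_apply_apply]
  have hTaylor : |f xj - f xi - (inner ℝ (gradient f xi) v : ℝ)| ≤
      H * μ ^ 2 / 2 + γH * μ ^ 3 / 6 := by
    have : φ 1 - φ 0 = f xj - f xi - (inner ℝ (gradient f xi) v : ℝ) := by
      simp only [hφdef, hc1, hc0, hG0, mul_one, mul_zero, sub_zero]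
      ring
    rw [this] at stepB
    calc |f xj - f xi - (inner ℝ (gradient f xi) v : ℝ)|
        ≤ 0 * 1 + (H * μ ^ 2) * 1 ^ 2 / 2 + (γH * μ ^ 3 / 2) * 1 ^ 3 / 3 := stepB
      _ = H * μ ^ 2 / 2 + γH * μ ^ 3 / 6 := by ring
  -- conclude
  have hinner : (inner ℝ (gradient f xi) ((μ : ℝ)⁻¹ • v) : ℝ) =
      μ⁻¹ * (inner ℝ (gradient f xi) v : ℝ) := real_inner_smul_right _ _ _
  set p : ℝ := (inner ℝ (gradient f xi) v : ℝ) with hp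
  set s : ℝ := f xj - f xi with hs
  set B : ℝ := H * μ ^ 2 / 2 + γH * μ ^ 3 / 6 with hB
  obtain ⟨hl, hr⟩ := abs_le.mp hTaylor
  have hμinv : (0:ℝ) ≤ μ⁻¹ := inv_nonneg.mpr hμ.le
  have h1 : μ⁻¹ * (s - p) ≤ μ⁻¹ * B := mul_le_mul_of_nonneg_left hr hμinv
  have h2 : μ⁻¹ * (-B) ≤ μ⁻¹ * (s - p) := mul_le_mul_of_nonneg_left hl hμinv
  have hBμ : μ⁻¹ * B = 1 / 2 * μ * H + 1 / 6 * μ ^ 2 * γH := by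
    rw [hB]
    field_simp
  have hdiv : s / μ = μ⁻¹ * s := by rw [div_eq_inv_mul]
  have e1 : μ⁻¹ * (s - p) = μ⁻¹ * s - μ⁻¹ * p := by ring
  have e2 : μ⁻¹ * (-B) = -(μ⁻¹ * B) := by ring
  rw [e1] at h1 h2
  rw [e2, hBμ] at h2
  rw [hBμ] at h1
  constructor
  · rw [hinner, hdiv]
    linarith
  · rw [hinner, hdiv]
    linarith
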